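/- Let I ⊆ ℝ be an interval and let f : I → ℝ be continuous. Suppose that for every t ∈ I there exists a function F_t of a real variable s, defined and continuously differentiable on a neighborhood of t in I, such that F_t(t) = f(t) and F_t(s) ≥ f(s) for all s in that neighborhood. If the function t ↦ F_t'(t) (the derivative of F_t in s evaluated at s = t) is locally bounded on I, then f is locally Lipschitz on I. -/

import Mathlib

open Set Filter Topology

/-- Fencing lemma: if the right liminf slopes of a continuous function on `[a, b]` are
bounded above by `C`, then `f b - f a ≤ C * (b - a)`. -/
lemma key_slope_bound (f : ℝ → ℝ) (C : ℝ) {a b : ℝ} (hab : a ≤ b)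
    (hcont : ContinuousOn f (Icc a b))
    (hslope : ∀ x ∈ Ico a b, ∀ r, C < r → ∃ᶠ z in 𝓝[>] x, slope f x z < r) :
    f b - f a ≤ C * (b - a) := by
  have H := image_le_of_liminf_slope_right_le_deriv_boundary (B := fun x => f a + C * (x - a))
    (B' := fun _ => C) hcont (by simp)
    (by fun_prop)
    (fun x _ => by
      simpa using (((hasDerivWithinAt_id x (Ici x)).sub_const a).const_mul C).const_add (f a))
    hslope (right_mem_Icc.2 hab)
  have H' : f b ≤ f a + C * (b - a) := H
  linarith

/-- Wang–Zheng Theorem 1.1 (1): if `f` is continuous on an interval `I` and admits at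
each `t ∈ I` a continuously differentiable upper support function `F t` touching `f`
at `t`, and the function `t ↦ (F t)' (t)` is locally bounded on `I`, then `f` is
locally Lipschitz on `I`. -/
theorem continuous_with_upper_support_locallyBounded_deriv_locallyLipschitz
    (I : Set ℝ) (hI : I.OrdConnected) (f : ℝ → ℝ) (hf : ContinuousOn f I)
    (F F' : ℝ → ℝ → ℝ)
    (hF : ∀ t ∈ I, ∃ U ∈ 𝓝[I] t,
      (∀ s ∈ U, HasDerivWithinAt (F t) (F' t s) U s) ∧
      ContinuousOn (F' t) U ∧ F t t = f t ∧ ∀ s ∈ U, f s ≤ F t s)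
    (hbd : ∀ t ∈ I, ∃ U ∈ 𝓝[I] t, ∃ C : ℝ, ∀ s ∈ U, |F' s s| ≤ C) :
    ∀ t ∈ I, ∃ U ∈ 𝓝[I] t, ∃ C : NNReal, LipschitzOnWith C f U := by
  intro t ht
  obtain ⟨U1, hU1, C, hC⟩ := hbd t ht
  obtain ⟨ε, hε, hball⟩ := Metric.mem_nhdsWithin_iff.1 hU1
  set V : Set ℝ := Ioo (t - ε) (t + ε) ∩ I with hV
  have hball' : Metric.ball t ε = Ioo (t - ε) (t + ε) := Real.ball_eq_Ioo t ε
  have hVU1 : V ⊆ U1 := by rw [hV, ← hball']; exact hball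
  have hVI : V ⊆ I := inter_subset_right
  have hVmem : V ∈ 𝓝[I] t := by
    refine inter_mem ?_ self_mem_nhdsWithin
    exact nhdsWithin_le_nhds (Ioo_mem_nhds (by linarith) (by linarith))
  have htV : t ∈ V := ⟨⟨by linarith, by linarith⟩, ht⟩
  have hVord : V.OrdConnected := ordConnected_Ioo.inter hI
  have hC0 : 0 ≤ C := (abs_nonneg _).trans (hC t (hVU1 htV))
  -- the key two-sided estimate
  have claim : ∀ a ∈ V, ∀ b ∈ V, a ≤ b →
      f b - f a ≤ C * (b - a) ∧ f a - f b ≤ C * (b - a) := by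
    intro a haV b hbV hab
    have hIccV : Icc a b ⊆ V := hVord.out haV hbV
    have hIccI : Icc a b ⊆ I := fun x hx => hVI (hIccV hx)
    constructor
    · -- upper estimate via right slopes
      refine key_slope_bound f C hab (hf.mono hIccI) ?_
      intro x hx r hr
      have hxV : x ∈ V := hIccV (Ico_subset_Icc_self hx)
      have hxI : x ∈ I := hVI hxV
      obtain ⟨U, hU, hderiv, -, heq, hle⟩ := hF x hxI
      have hxU : x ∈ U := mem_of_mem_nhdsWithin hxI hU
      have hd := hderiv x hxU
      have htend := hasDerivWithinAt_iff_tendsto_slope.1 hd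
      have hFr : F' x x < r := lt_of_le_of_lt ((abs_le.1 (hC x (hVU1 hxV))).2) hr
      have hxb : x < b := hx.2
      have hsub : Ioc x b ⊆ I := fun z hz => hI.out hxI (hVI hbV) ⟨hz.1.le, hz.2⟩
      have hle_filter : 𝓝[>] x ≤ 𝓝[I] x := by
        rw [← nhdsWithin_Ioc_eq_nhdsGT hxb]
        exact nhdsWithin_mono x hsub
      have hUx : U ∈ 𝓝[>] x := hle_filter hU
      have hle_filter2 : 𝓝[>] x ≤ 𝓝[U \ {x}] x := by
        rw [nhdsWithin_restrict'' (Ioi x) hUx]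
        exact nhdsWithin_mono x fun z hz => ⟨hz.2, ne_of_gt hz.1⟩
      have ev1 : ∀ᶠ z in 𝓝[>] x, slope (F x) x z < r :=
        Filter.Tendsto.eventually_lt_const hFr (htend.mono_left hle_filter2)
      have ev2 : ∀ᶠ z in 𝓝[>] x, z ∈ U := hUx
      have ev3 : ∀ᶠ z in 𝓝[>] x, x < z := self_mem_nhdsWithin
      refine ((ev1.and (ev2.and ev3)).mono ?_).frequently
      rintro z ⟨h1, h2, h3⟩
      calc slope f x z = (f z - f x) / (z - x) := slope_def_field f x z
        _ ≤ (F x z - F x x) / (z - x) := by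
            refine (div_le_div_iff_of_pos_right (sub_pos.2 h3)).2 ?_
            have := hle z h2
            linarith [heq.ge, heq.le]
        _ = slope (F x) x z := (slope_def_field (F x) x z).symm
        _ < r := h1
    · -- lower estimate via left slopes, using reflection
      have hg : f a - f b ≤ C * (b - a) := by
        have hres := key_slope_bound (fun y => f (-y)) C (neg_le_neg hab)
          (hf.comp continuousOn_neg (fun y hy => hIccI (by
            simp only [mem_Icc] at hy ⊢
            constructor <;> linarith [hy.1, hy.2])))
          ?_
        · simpa using hres.trans_eq (by ring)
        intro x hx r hr
        set t0 : ℝ := -x with ht0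
        have ht0mem : t0 ∈ Ioc a b := ⟨by simp only [ht0]; linarith [hx.2], by simp only [ht0]; linarith [hx.1]⟩
        have ht0V : t0 ∈ V := hIccV ⟨ht0mem.1.le, ht0mem.2⟩
        have ht0I : t0 ∈ I := hVI ht0V
        obtain ⟨U, hU, hderiv, -, heq, hle⟩ := hF t0 ht0I
        have ht0U : t0 ∈ U := mem_of_mem_nhdsWithin ht0I hU
        have hd := hderiv t0 ht0U
        have htend := hasDerivWithinAt_iff_tendsto_slope.1 hd
        have hFr : -r < F' t0 t0 := by
          have := (abs_le.1 (hC t0 (hVU1 ht0V))).1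
          linarith
        have hat0 : a < t0 := ht0mem.1
        have hsub : Ico a t0 ⊆ I := fun z hz => hI.out (hVI haV) ht0I ⟨hz.1, hz.2.le⟩
        have hle_filter : 𝓝[<] t0 ≤ 𝓝[I] t0 := by
          rw [← nhdsWithin_Ico_eq_nhdsLT hat0]
          exact nhdsWithin_mono t0 hsub
        have hUt0 : U ∈ 𝓝[<] t0 := hle_filter hU
        have hle_filter2 : 𝓝[<] t0 ≤ 𝓝[U \ {t0}] t0 := by
          rw [nhdsWithin_restrict'' (Iio t0) hUt0]
          exact nhdsWithin_mono t0 fun z hz => ⟨hz.2, ne_of_lt hz.1⟩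
        have ev1 : ∀ᶠ w in 𝓝[<] t0, -r < slope (F t0) t0 w :=
          Filter.Tendsto.eventually_const_lt hFr (htend.mono_left hle_filter2)
        have ev2 : ∀ᶠ w in 𝓝[<] t0, w ∈ U := hUt0
        have ev3 : ∀ᶠ w in 𝓝[<] t0, w < t0 := self_mem_nhdsWithin
        have hmap : Tendsto (fun w : ℝ => -w) (𝓝[<] t0) (𝓝[>] x) := by
          apply tendsto_nhdsWithin_of_tendsto_nhds_of_eventually_within
          · have : Tendsto (fun w : ℝ => -w) (𝓝 t0) (𝓝 (-t0)) := (continuous_neg.tendsto t0)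
            simpa [ht0] using this.mono_left nhdsWithin_le_nhds
          · filter_upwards [ev3] with w hw
            simp only [mem_Ioi]
            have ht0' : t0 = -x := ht0
            linarith
        apply hmap.frequently
        refine ((ev1.and (ev2.and ev3)).mono ?_).frequently
        rintro w ⟨h1, h2, h3⟩
        have ht0' : t0 = -x := ht0
        have hpos : (0:ℝ) < t0 - w := by linarith
        calc slope (fun y => f (-y)) x (-w)
            = (f w - f t0) / (t0 - w) := by
              rw [slope_def_field]
              simp only [neg_neg]
              rw [ht0']
              congr 1
              ring
          _ ≤ (F t0 w - F t0 t0) / (t0 - w) := by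
              refine (div_le_div_iff_of_pos_right hpos).2 ?_
              have := hle w h2
              linarith [heq.ge, heq.le]
          _ = -slope (F t0) t0 w := by
              rw [slope_def_field]
              have e : t0 - w = -(w - t0) := by ring
              rw [e, div_neg]
          _ < r := by linarith
      exact hg
  -- assemble the Lipschitz estimate
  refine ⟨V, hVmem, C.toNNReal, ?_⟩
  apply LipschitzOnWith.of_dist_le_mul
  intro x hx y hy
  rw [Real.dist_eq, Real.dist_eq, Real.coe_toNNReal C hC0]
  rcases le_total x y with h | h
  · obtain ⟨h1, h2⟩ := claim x hx y hy h
    rw [abs_of_nonpos (by linarith : x - y ≤ 0)]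
    rw [abs_le]
    constructor <;> nlinarith
  · obtain ⟨h1, h2⟩ := claim y hy x hx h
    rw [abs_of_nonneg (by linarith : 0 ≤ x - y)]
    rw [abs_le]
    constructor <;> nlinarith
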